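/- arXiv:2102.13591 — 7 statements merged into one kernel-verified Lean document; each statement's English description precedes it below -/
import Mathlib

section
/- Let (A, +, ·) be a left brace with circle operation a ∘ b = a·b + a + b. Define σ_x(y) = x ∘ y − x and τ_y(x) = t ∘ x − t where t is the inverse of σ_x(y) in the group (A, ∘). Then the map ř(x,y) = (σ_x(y), τ_y(x)) satisfies the set-theoretic braid relation (ř × id)(id × ř)(ř × id) = (id × ř)(ř × id)(id × ř). -/
/-- The circle operation of a left brace: `a ∘ b = a·b + a + b`. -/
def circ {A : Type*} [AddCommGroup A] (mul : A → A → A) (a b : A) : A :=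
  mul a b + a + b

/-- `σ_x(y) = x ∘ y - x`. -/
def sigB {A : Type*} [AddCommGroup A] (mul : A → A → A) (x y : A) : A :=
  circ mul x y - x

/-- `τ_y(x) = t ∘ x - t`, where `t = inv (σ_x(y))` is the `∘`-inverse of `σ_x(y)`. -/
def tauB {A : Type*} [AddCommGroup A] (mul : A → A → A) (inv : A → A) (y x : A) : A :=
  circ mul (inv (sigB mul x y)) x - inv (sigB mul x y)

/-- The set-theoretic map `ř(x,y) = (σ_x(y), τ_y(x))`. -/
def rFun {X : Type*} (σ τ : X → X → X) : X × X → X × X :=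
  fun p => (σ p.1 p.2, τ p.2 p.1)

/-- `ř × id` acting on `X × X × X`. -/
def rFun12 {X : Type*} (σ τ : X → X → X) : X × X × X → X × X × X :=
  fun p => (σ p.1 p.2.1, τ p.2.1 p.1, p.2.2)

/-- `id × ř` acting on `X × X × X`. -/
def rFun23 {X : Type*} (σ τ : X → X → X) : X × X × X → X × X × X :=
  fun p => (p.1, σ p.2.1 p.2.2, τ p.2.2 p.2.1)

/-- For a left brace `(A, +, ·)` with circle group `(A, ∘)`, the map
`ř(x,y) = (σ_x(y), τ_y(x))` satisfies the set-theoretic braid relation. -/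
theorem brace_braid {A : Type*} [AddCommGroup A] (mul : A → A → A) (inv : A → A)
    (hdist : ∀ a b c : A, mul a (b + c) = mul a b + mul a c)
    (hassoc : ∀ a b c : A, circ mul (circ mul a b) c = circ mul a (circ mul b c))
    (hid : ∀ a : A, circ mul 0 a = a ∧ circ mul a 0 = a)
    (hcinv : ∀ a : A, circ mul (inv a) a = 0 ∧ circ mul a (inv a) = 0) :
    rFun12 (sigB mul) (tauB mul inv) ∘ rFun23 (sigB mul) (tauB mul inv)
        ∘ rFun12 (sigB mul) (tauB mul inv)
      = rFun23 (sigB mul) (tauB mul inv) ∘ rFun12 (sigB mul) (tauB mul inv)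
        ∘ rFun23 (sigB mul) (tauB mul inv) := by
  set σ := sigB mul with hσdef
  set c := circ mul with hcdef
  set τ := tauB mul inv with hτdef
  have hc : ∀ a b, c a b = σ a b + a := by
    intro a b; simp [hσdef, hcdef, sigB]
  have hσadd : ∀ x y z, σ x (y + z) = σ x y + σ x z := by
    intro x y z; simp only [hσdef, hcdef, sigB, circ, hdist]; abel
  have hσsub : ∀ x y z, σ x (y - z) = σ x y - σ x z := by
    intro x y z
    have h := hσadd x (y - z) z
    rw [sub_add_cancel] at h
    exact eq_sub_of_add_eq h.symm
  have hσ0 : ∀ a, σ 0 a = a := by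
    intro a
    have h := (hid a).1
    rw [hcdef] at h
    simp [hσdef, sigB, h]
  have hσc : ∀ a b z, σ (c a b) z = σ a (σ b z) := by
    intro a b z
    have h1 : σ (c a b) z = c (c a b) z - c a b := by simp [hσdef, hcdef, sigB]
    have h2 : c b z - b = σ b z := by rw [hc]; abel
    rw [h1, hassoc, hc a (c b z), hc a b, ← h2, hσsub]
    abel
  have hτ : ∀ y x, τ y x = σ (inv (σ x y)) x := fun y x => rfl
  have hkey : ∀ x y, c (σ x y) (τ y x) = c x y := by
    intro x y
    rw [hc (σ x y) (τ y x), hτ, ← hσc, (hcinv (σ x y)).2, hσ0, hc x y]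
    abel
  have hlcancel : ∀ a u v, c a u = c a v → u = v := by
    intro a u v h
    have h2 := congrArg (c (inv a)) h
    rw [← hassoc (inv a) a u, ← hassoc (inv a) a v, (hcinv a).1, (hid u).1,
      (hid v).1] at h2
    exact h2
  have hsolve : ∀ a x r, c a x = r → x = c (inv a) r := by
    intro a x r h
    rw [← h, ← hassoc (inv a) a x, (hcinv a).1, (hid x).1]
  have hgrp : ∀ w q p, c (inv (c w q)) (c w p) = c (inv q) p := by
    intro w q p
    apply hlcancel (c w q)
    rw [← hassoc (c w q) (inv (c w q)) (c w p), (hcinv (c w q)).2, (hid (c w p)).1,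
      hassoc w q (c (inv q) p), ← hassoc q (inv q) p, (hcinv q).2, (hid p).1]
  have hA1 : ∀ x y z, σ (σ x y) (σ (τ y x) z) = σ x (σ y z) := by
    intro x y z
    rw [← hσc (σ x y) (τ y x) z, hkey, hσc]
  have hB : ∀ x y z, c (σ x y) (σ (τ y x) z) = σ x (c y z) := by
    intro x y z
    rw [hc (σ x y) (σ (τ y x) z), hA1, hc y z, hσadd]
  have hC : ∀ x y z, c (σ x y) (c (τ y x) z) = c x (c y z) := by
    intro x y z
    rw [← hassoc, hkey, hassoc]
  have hσval : ∀ x y z, σ (τ y x) z = c (inv (σ x y)) (σ x (c y z)) :=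
    fun x y z => hsolve _ _ _ (hB x y z)
  have hcval : ∀ x y z, c (τ y x) z = c (inv (σ x y)) (c x (c y z)) :=
    fun x y z => hsolve _ _ _ (hC x y z)
  have hτ2 : ∀ y x, τ y x = c (inv (σ x y)) (c x y) :=
    fun y x => hsolve _ _ _ (hkey x y)
  funext p
  obtain ⟨x, y, z⟩ := p
  simp only [Function.comp_apply, rFun12, rFun23, Prod.mk.injEq]
  refine ⟨?_, ?_, ?_⟩
  · exact hA1 x y z
  · rw [hτ2 (σ (τ y x) z) (σ x y), hA1 x y z, hB x y z,
      hσval x (σ y z) (τ z y), hkey y z]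
  · rw [hτ2 z (τ y x), hσval x y z, hcval x y z,
      hgrp (inv (σ x y)) (σ x (c y z)) (c x (c y z)),
      hτ2 (τ z y) (τ (σ y z) x), hσval x (σ y z) (τ z y),
      hcval x (σ y z) (τ z y), hkey y z,
      hgrp (inv (σ x (σ y z))) (σ x (c y z)) (c x (c y z))]
end

section
/- Let X be a finite set, σ, τ : X → X bijections with σ∘τ = τ∘σ = id_X. Then ř = Σ_{x,y∈X} e_{x,σ(y)} ⊗ e_{y,τ(x)} satisfies the braid relation ř₁₂ ř₂₃ ř₁₂ = ř₂₃ ř₁₂ ř₂₃ on V ⊗ V ⊗ V where V = ℂ^|X|. -/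
open Matrix

/-- Elementary matrix `e_{x,y}` with a single `1` in entry `(x,y)`. -/
noncomputable def eM {X : Type*} [DecidableEq X] (x y : X) : Matrix X X ℂ :=
  Matrix.single x y 1

/-- Kronecker (tensor) product of two `X × X` matrices, indexed by `X × X`. -/
def kron2 {X : Type*} (A B : Matrix X X ℂ) : Matrix (X × X) (X × X) ℂ :=
  Matrix.of fun p q => A p.1 q.1 * B p.2 q.2

/-- The linearized set-theoretic solution `ř = Σ_{x,y} e_{x,σ_x(y)} ⊗ e_{y,τ_y(x)}`. -/
noncomputable def rcheckMat {X : Type*} [DecidableEq X] [Fintype X] (σ τ : X → X → X) :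
    Matrix (X × X) (X × X) ℂ :=
  ∑ x : X, ∑ y : X, kron2 (eM x (σ x y)) (eM y (τ y x))

/-- The permutation operator `P = Σ_{x,y} e_{x,y} ⊗ e_{y,x}`. -/
noncomputable def Pmat (X : Type*) [DecidableEq X] [Fintype X] :
    Matrix (X × X) (X × X) ℂ :=
  ∑ x : X, ∑ y : X, kron2 (eM x y) (eM y x)

/-- A matrix on `V ⊗ V` acting on legs (0,1) of `V ⊗ V ⊗ V`. -/
def leg01 {X : Type*} [DecidableEq X] (M : Matrix (X × X) (X × X) ℂ) :
    Matrix (X × X × X) (X × X × X) ℂ :=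
  Matrix.of fun p q => M (p.1, p.2.1) (q.1, q.2.1) * (if p.2.2 = q.2.2 then 1 else 0)

/-- A matrix on `V ⊗ V` acting on legs (1,2) of `V ⊗ V ⊗ V`. -/
def leg12 {X : Type*} [DecidableEq X] (M : Matrix (X × X) (X × X) ℂ) :
    Matrix (X × X × X) (X × X × X) ℂ :=
  Matrix.of fun p q => (if p.1 = q.1 then 1 else 0) * M p.2 q.2

/-- A matrix on `V ⊗ V` acting on legs (0,2) of `V ⊗ V ⊗ V`. -/
def leg02 {X : Type*} [DecidableEq X] (M : Matrix (X × X) (X × X) ℂ) :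
    Matrix (X × X × X) (X × X × X) ℂ :=
  Matrix.of fun p q => M (p.1, p.2.2) (q.1, q.2.2) * (if p.2.1 = q.2.1 then 1 else 0)

/-- Triple Kronecker product indexed by `X × X × X`. -/
def kron3 {X : Type*} (A B C : Matrix X X ℂ) : Matrix (X × X × X) (X × X × X) ℂ :=
  Matrix.of fun p q => A p.1 q.1 * B p.2.1 q.2.1 * C p.2.2 q.2.2

/-- The 0-1 matrix of a function. -/
def funMat {α : Type*} [DecidableEq α] (F : α → α) : Matrix α α ℂ :=
  Matrix.of fun p q => if q = F p then 1 else 0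

lemma funMat_mul {α : Type*} [DecidableEq α] [Fintype α] (F G : α → α) :
    funMat F * funMat G = funMat (G ∘ F) := by
  ext p q
  rw [Matrix.mul_apply, Finset.sum_eq_single (F p)]
  · simp [funMat]
  · intro x _ hx; simp [funMat, hx]
  · simp

lemma rmat_eq {X : Type*} [DecidableEq X] [Fintype X] (σ τ : X → X) :
    (∑ x : X, ∑ y : X, kron2 (eM x (σ y)) (eM y (τ x)))
      = Matrix.of fun p q : X × X => if q = (σ p.2, τ p.1) then 1 else 0 := by
  ext ⟨a, b⟩ ⟨c, d⟩
  simp only [Matrix.sum_apply, kron2, eM, Matrix.single, Matrix.of_apply]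
  rw [Finset.sum_eq_single a, Finset.sum_eq_single b]
  · simp only [Prod.ext_iff]
    by_cases h1 : c = σ b <;> by_cases h2 : d = τ a <;>
      simp [h1, h2, eq_comm]
  · intro y _ hy; simp [hy]
  · simp
  · intro x _ hx
    apply Finset.sum_eq_zero
    intro y _; simp [hx]
  · simp

lemma leg01_funMat {X : Type*} [DecidableEq X] [Fintype X] (f : X × X → X × X) :
    leg01 (Matrix.of fun p q : X × X => if q = f p then (1:ℂ) else 0)
      = funMat (fun p : X × X × X => ((f (p.1, p.2.1)).1, (f (p.1, p.2.1)).2, p.2.2)) := by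
  ext ⟨a, b, c⟩ ⟨d, e, g⟩
  simp only [leg01, funMat, Matrix.of_apply, Prod.ext_iff]
  by_cases h1 : (d, e) = f (a, b) <;> by_cases h2 : c = g <;>
    simp_all [Prod.ext_iff, eq_comm]

lemma leg12_funMat {X : Type*} [DecidableEq X] [Fintype X] (f : X × X → X × X) :
    leg12 (Matrix.of fun p q : X × X => if q = f p then (1:ℂ) else 0)
      = funMat (fun p : X × X × X => (p.1, f p.2)) := by
  ext ⟨a, b, c⟩ ⟨d, e, g⟩
  simp only [leg12, funMat, Matrix.of_apply, Prod.ext_iff]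
  by_cases h1 : (e, g) = f (b, c) <;> by_cases h2 : a = d <;>
    simp_all [Prod.ext_iff, eq_comm]

/-- Lyubashenko's solution `ř = Σ_{x,y} e_{x,σ(y)} ⊗ e_{y,τ(x)}` (with `σ, τ` mutually
inverse bijections) satisfies the braid relation `ř₁₂ ř₂₃ ř₁₂ = ř₂₃ ř₁₂ ř₂₃`. -/
theorem lyubashenko_braid {X : Type*} [DecidableEq X] [Fintype X] (σ τ : X → X)
    (hστ : σ ∘ τ = id) (hτσ : τ ∘ σ = id) :
    leg01 (∑ x : X, ∑ y : X, kron2 (eM x (σ y)) (eM y (τ x)))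
        * leg12 (∑ x : X, ∑ y : X, kron2 (eM x (σ y)) (eM y (τ x)))
        * leg01 (∑ x : X, ∑ y : X, kron2 (eM x (σ y)) (eM y (τ x)))
      = leg12 (∑ x : X, ∑ y : X, kron2 (eM x (σ y)) (eM y (τ x)))
        * leg01 (∑ x : X, ∑ y : X, kron2 (eM x (σ y)) (eM y (τ x)))
        * leg12 (∑ x : X, ∑ y : X, kron2 (eM x (σ y)) (eM y (τ x))) := by
  have hs : ∀ x, σ (τ x) = x := fun x => congrFun hστ x
  have ht : ∀ x, τ (σ x) = x := fun x => congrFun hτσ x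
  rw [rmat_eq, leg01_funMat, leg12_funMat, funMat_mul, funMat_mul, funMat_mul, funMat_mul]
  unfold funMat
  ext ⟨a, b, c⟩ ⟨d, e, g⟩
  simp [Function.comp, hs, ht]
end

section
/- Let (X, ř) be a finite involutive non-degenerate set-theoretic solution, F = Σ_{x,y∈X} e_{x,x} ⊗ e_{σ_x(y),y}, and P the permutation operator. Then F is invertible with F⁻¹ = Σ_{x,y∈X} e_{x,x} ⊗ e_{y,σ_x(y)}, and ř = F⁻¹ P F. -/
open Matrix

/-- Matrix of a function: entry `(p,q)` is `1` iff `q = f p`. -/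
noncomputable def funM {Y : Type*} [DecidableEq Y] (f : Y → Y) : Matrix Y Y ℂ :=
  Matrix.of fun p q => if q = f p then 1 else 0

lemma funM_mul {Y : Type*} [DecidableEq Y] [Fintype Y] (f g : Y → Y) :
    funM f * funM g = funM (g ∘ f) := by
  ext p q
  simp only [funM, Matrix.mul_apply, of_apply, ite_mul, one_mul, zero_mul,
    mul_ite, mul_one, mul_zero, ← ite_and]
  rw [Finset.sum_eq_single (f p) (by intro b _ hb; simp [hb]) (by simp)]
  simp

lemma funM_id {Y : Type*} [DecidableEq Y] [Fintype Y] :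
    funM (id : Y → Y) = 1 := by
  ext p q
  simp [funM, Matrix.one_apply, eq_comm]

lemma hgen {X : Type*} [DecidableEq X] [Fintype X] (a : X) (P : X → Prop)
    [DecidablePred P] :
    (∑ x : X, if x = a ∧ P x then (1 : ℂ) else 0) = if P a then 1 else 0 := by
  simp [ite_and, Finset.sum_ite_eq']

lemma Fsum_eq {X : Type*} [DecidableEq X] [Fintype X] (σ : X → X → X)
    (hσ : ∀ x, Function.Bijective (σ x)) :
    (∑ x : X, ∑ y : X, kron2 (eM x x) (eM (σ x y) y))
      = funM (fun p => (p.1, (Equiv.ofBijective (σ p.1) (hσ p.1)).symm p.2)) := by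
  ext p q
  simp only [Matrix.sum_apply, kron2, eM, Matrix.single, of_apply, ite_mul,
    one_mul, zero_mul, mul_ite, mul_one, mul_zero, ← ite_and]
  rw [show (∑ x : X, ∑ y : X,
        if (σ x y = p.2 ∧ y = q.2) ∧ x = p.1 ∧ x = q.1 then (1:ℂ) else 0)
      = ∑ x : X, ∑ y : X,
        if y = q.2 ∧ (x = p.1 ∧ (x = q.1 ∧ σ x y = p.2)) then (1:ℂ) else 0 from
    Finset.sum_congr rfl fun x _ => Finset.sum_congr rfl fun y _ =>
      if_congr (by tauto) rfl rfl]
  rw [Finset.sum_congr rfl fun x _ => hgen q.2 _, hgen p.1 _]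
  apply if_congr _ rfl rfl
  simp only [funM, of_apply, Prod.ext_iff, Equiv.eq_symm_apply, Equiv.ofBijective_apply]
  constructor
  · rintro ⟨h1, h2⟩; exact ⟨h1.symm, h2⟩
  · rintro ⟨h1, h2⟩; exact ⟨h1.symm, h2⟩

lemma Gsum_eq {X : Type*} [DecidableEq X] [Fintype X] (σ : X → X → X) :
    (∑ x : X, ∑ y : X, kron2 (eM x x) (eM y (σ x y)))
      = funM (fun p => (p.1, σ p.1 p.2)) := by
  ext p q
  simp only [Matrix.sum_apply, kron2, eM, Matrix.single, of_apply, ite_mul,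
    one_mul, zero_mul, mul_ite, mul_one, mul_zero, ← ite_and]
  trans (∑ x : X, ∑ y : X,
      if y = p.2 ∧ (x = p.1 ∧ (x = q.1 ∧ σ x y = q.2)) then (1:ℂ) else 0)
  · exact Finset.sum_congr rfl fun x _ => Finset.sum_congr rfl fun y _ =>
      if_congr (by tauto) rfl rfl
  rw [Finset.sum_congr rfl fun x _ => hgen p.2 _, hgen p.1 _]
  simp only [funM, of_apply, Prod.ext_iff]
  apply if_congr _ rfl rfl
  constructor
  · rintro ⟨h1, h2⟩; exact ⟨h1.symm, h2.symm⟩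
  · rintro ⟨h1, h2⟩; exact ⟨h1.symm, h2.symm⟩

lemma Pmat_eq (X : Type*) [DecidableEq X] [Fintype X] :
    (∑ x : X, ∑ y : X, kron2 (eM x y) (eM y x)) = funM (Prod.swap : X × X → X × X) := by
  ext p q
  simp only [Matrix.sum_apply, kron2, eM, Matrix.single, of_apply, ite_mul,
    one_mul, zero_mul, mul_ite, mul_one, mul_zero, ← ite_and]
  trans (∑ x : X, ∑ y : X,
      if y = p.2 ∧ (x = p.1 ∧ (x = q.2 ∧ y = q.1)) then (1:ℂ) else 0)
  · exact Finset.sum_congr rfl fun x _ => Finset.sum_congr rfl fun y _ =>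
      if_congr (by tauto) rfl rfl
  rw [Finset.sum_congr rfl fun x _ => hgen p.2 _, hgen p.1 _]
  simp only [funM, of_apply, Prod.ext_iff, Prod.swap]
  apply if_congr _ rfl rfl
  constructor
  · rintro ⟨h1, h2⟩; exact ⟨h2.symm, h1.symm⟩
  · rintro ⟨h1, h2⟩; exact ⟨h2.symm, h1.symm⟩

lemma Rsum_eq {X : Type*} [DecidableEq X] [Fintype X] (σ τ : X → X → X) :
    (∑ x : X, ∑ y : X, kron2 (eM x (σ x y)) (eM y (τ y x)))
      = funM (fun p : X × X => (σ p.1 p.2, τ p.2 p.1)) := by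
  ext p q
  simp only [Matrix.sum_apply, kron2, eM, Matrix.single, of_apply, ite_mul,
    one_mul, zero_mul, mul_ite, mul_one, mul_zero, ← ite_and]
  trans (∑ x : X, ∑ y : X,
      if y = p.2 ∧ (x = p.1 ∧ (σ x y = q.1 ∧ τ y x = q.2)) then (1:ℂ) else 0)
  · exact Finset.sum_congr rfl fun x _ => Finset.sum_congr rfl fun y _ =>
      if_congr (by tauto) rfl rfl
  rw [Finset.sum_congr rfl fun x _ => hgen p.2 _, hgen p.1 _]
  simp only [funM, of_apply, Prod.ext_iff]
  apply if_congr _ rfl rfl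
  constructor
  · rintro ⟨h1, h2⟩; exact ⟨h1.symm, h2.symm⟩
  · rintro ⟨h1, h2⟩; exact ⟨h1.symm, h2.symm⟩

theorem twist_similarity_aux {X : Type*} [DecidableEq X] [Fintype X] (σ τ : X → X → X)
    (hσ : ∀ x, Function.Bijective (σ x))
    (hτ : ∀ y, Function.Bijective (τ y))
    (hinv : ∀ x y : X, σ (σ x y) (τ y x) = x ∧ τ (τ y x) (σ x y) = y) :
    (∑ x : X, ∑ y : X, kron2 (eM x x) (eM (σ x y) y))
        * (∑ x : X, ∑ y : X, kron2 (eM x x) (eM y (σ x y))) = 1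
    ∧ (∑ x : X, ∑ y : X, kron2 (eM x x) (eM y (σ x y)))
        * (∑ x : X, ∑ y : X, kron2 (eM x x) (eM (σ x y) y)) = 1
    ∧ (∑ x : X, ∑ y : X, kron2 (eM x (σ x y)) (eM y (τ y x)))
        = (∑ x : X, ∑ y : X, kron2 (eM x x) (eM y (σ x y)))
          * (∑ x : X, ∑ y : X, kron2 (eM x y) (eM y x))
          * (∑ x : X, ∑ y : X, kron2 (eM x x) (eM (σ x y) y)) := by
  rw [Fsum_eq σ hσ, Gsum_eq σ, Pmat_eq X, Rsum_eq σ τ, funM_mul, funM_mul, funM_mul, funM_mul]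
  refine ⟨?_, ?_, ?_⟩
  · rw [show ((fun p : X × X => (p.1, σ p.1 p.2)) ∘
        (fun p : X × X => (p.1, (Equiv.ofBijective (σ p.1) (hσ p.1)).symm p.2))) = id from
      funext fun p => Prod.ext rfl ((Equiv.ofBijective (σ p.1) (hσ p.1)).apply_symm_apply p.2)]
    exact funM_id
  · rw [show ((fun p : X × X => (p.1, (Equiv.ofBijective (σ p.1) (hσ p.1)).symm p.2)) ∘
        (fun p : X × X => (p.1, σ p.1 p.2))) = id from
      funext fun p => Prod.ext rfl ((Equiv.ofBijective (σ p.1) (hσ p.1)).symm_apply_apply p.2)]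
    exact funM_id
  · have hfun : (fun p : X × X => (σ p.1 p.2, τ p.2 p.1))
        = ((fun p : X × X => (p.1, (Equiv.ofBijective (σ p.1) (hσ p.1)).symm p.2))
            ∘ Prod.swap ∘ fun p : X × X => (p.1, σ p.1 p.2)) := by
      funext p
      show (σ p.1 p.2, τ p.2 p.1)
          = (σ p.1 p.2, (Equiv.ofBijective (σ (σ p.1 p.2)) (hσ _)).symm p.1)
      refine Prod.ext rfl ?_
      rw [Equiv.eq_symm_apply, Equiv.ofBijective_apply]
      exact (hinv p.1 p.2).1
    rw [hfun]


/-- The twist `F = Σ_{x,y} e_{x,x} ⊗ e_{σ_x(y),y}` is invertible with inverse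
`F⁻¹ = Σ_{x,y} e_{x,x} ⊗ e_{y,σ_x(y)}`, and `ř = F⁻¹ P F`. -/

theorem twist_similarity {X : Type*} [DecidableEq X] [Fintype X] (σ τ : X → X → X)
    (hσ : ∀ x, Function.Bijective (σ x))
    (hτ : ∀ y, Function.Bijective (τ y))
    (hinv : ∀ x y : X, σ (σ x y) (τ y x) = x ∧ τ (τ y x) (σ x y) = y) :
    (∑ x : X, ∑ y : X, kron2 (eM x x) (eM (σ x y) y))
        * (∑ x : X, ∑ y : X, kron2 (eM x x) (eM y (σ x y))) = 1
    ∧ (∑ x : X, ∑ y : X, kron2 (eM x x) (eM y (σ x y)))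
        * (∑ x : X, ∑ y : X, kron2 (eM x x) (eM (σ x y) y)) = 1
    ∧ rcheckMat σ τ
        = (∑ x : X, ∑ y : X, kron2 (eM x x) (eM y (σ x y))) * Pmat X
          * (∑ x : X, ∑ y : X, kron2 (eM x x) (eM (σ x y) y)) := by
  obtain ⟨h1, h2, h3⟩ := twist_similarity_aux σ τ hσ hτ hinv
  exact ⟨h1, h2, by rw [rcheckMat, Pmat]; exact h3⟩
end

section
/- Let (X, ř) be a finite involutive non-degenerate set-theoretic solution, F = Σ_{x,y∈X} e_{x,x} ⊗ e_{σ_x(y),y} and F^op = Σ_{x,y} e_{σ_x(y),y} ⊗ e_{x,x} (flip of tensor factors). Then (F^op)⁻¹ F = Σ_{x,y∈X} e_{y,σ_x(y)} ⊗ e_{x,τ_y(x)} = r, i.e. the twist factorizes the matrix r = Př. -/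
open Matrix

section lemmas
variable {X : Type*} [DecidableEq X] [Fintype X] (σ τ : X → X → X)

lemma key {X : Type*} [Fintype X] [DecidableEq X] (a : X) (g : X → ℂ) (P : X → Prop)
    [DecidablePred P] :
    (∑ x : X, if P x then (if x = a then g x else 0) else 0) = if P a then g a else 0 := by
  rw [Finset.sum_eq_single a]
  · simp
  · intro b _ hb; simp [hb]
  · simp

lemma eFop (p q : X × X) :
    (∑ x : X, ∑ y : X, kron2 (eM (σ x y) y) (eM x x)) p q
      = if p.2 = q.2 ∧ p.1 = σ p.2 q.1 then 1 else 0 := by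
  simp only [kron2, eM, Matrix.single, Matrix.sum_apply, Matrix.of_apply, ite_and,
    mul_ite, ite_mul, mul_one, mul_zero, one_mul, zero_mul,
    Finset.sum_ite_eq, Finset.sum_ite_eq', Finset.mem_univ, if_true, Finset.sum_const_zero]
  by_cases h : p.2 = q.2 <;> simp [h, key, eq_comm]

lemma eF (p q : X × X) :
    (∑ x : X, ∑ y : X, kron2 (eM x x) (eM (σ x y) y)) p q
      = if p.1 = q.1 ∧ p.2 = σ p.1 q.2 then 1 else 0 := by
  simp only [kron2, eM, Matrix.single, Matrix.sum_apply, Matrix.of_apply, ite_and,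
    mul_ite, ite_mul, mul_one, mul_zero, one_mul, zero_mul,
    Finset.sum_ite_eq, Finset.sum_ite_eq', Finset.mem_univ, if_true, Finset.sum_const_zero]
  by_cases h : p.1 = q.1 <;> simp [h, key, eq_comm]

lemma eRHS (p q : X × X) :
    (∑ x : X, ∑ y : X, kron2 (eM y (σ x y)) (eM x (τ y x))) p q
      = if q.1 = σ p.2 p.1 ∧ q.2 = τ p.1 p.2 then 1 else 0 := by
  simp only [kron2, eM, Matrix.single, Matrix.sum_apply, Matrix.of_apply, ite_and,
    mul_ite, ite_mul, mul_one, mul_zero, one_mul, zero_mul,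
    Finset.sum_ite_eq, Finset.sum_ite_eq', Finset.mem_univ, if_true, Finset.sum_const_zero]
  by_cases h1 : q.1 = σ p.2 p.1 <;> by_cases h2 : q.2 = τ p.1 p.2 <;>
    simp [h1, h2, eq_comm] <;> rw [key] <;> simp [h1, h2]

lemma eP (p q : X × X) :
    (Pmat X) p q = if p.1 = q.2 ∧ p.2 = q.1 then 1 else 0 := by
  simp only [Pmat, kron2, eM, Matrix.single, Matrix.sum_apply, Matrix.of_apply, ite_and,
    mul_ite, ite_mul, mul_one, mul_zero, one_mul, zero_mul,
    Finset.sum_ite_eq, Finset.sum_ite_eq', Finset.mem_univ, if_true, Finset.sum_const_zero]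
  by_cases h1 : p.1 = q.2 <;> by_cases h2 : p.2 = q.1 <;> simp [h1, h2, eq_comm]

lemma ercheck (p q : X × X) :
    (rcheckMat σ τ) p q = if q.1 = σ p.1 p.2 ∧ q.2 = τ p.2 p.1 then 1 else 0 := by
  simp only [rcheckMat, kron2, eM, Matrix.single, Matrix.sum_apply, Matrix.of_apply,
    ite_and, mul_ite, ite_mul, mul_one, mul_zero, one_mul, zero_mul,
    Finset.sum_ite_eq, Finset.sum_ite_eq', Finset.mem_univ, if_true, Finset.sum_const_zero]
  by_cases h1 : q.1 = σ p.1 p.2 <;> by_cases h2 : q.2 = τ p.2 p.1 <;>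
    simp [h1, h2, eq_comm] <;> rw [key] <;> simp [h1, h2]
lemma mulA (hσ : ∀ x, Function.Bijective (σ x)) :
    (∑ x : X, ∑ y : X, kron2 (eM (σ x y) y) (eM x x))
      * (∑ x : X, ∑ y : X, kron2 (eM (σ x y) y) (eM x x))ᵀ = 1 := by
  ext p q
  rw [Matrix.mul_apply]
  obtain ⟨c0, hc0⟩ := (hσ p.2).surjective p.1
  rw [Finset.sum_eq_single ((c0, p.2) : X × X)]
  · simp only [transpose_apply, eFop, Matrix.one_apply, hc0, eq_self_iff_true, true_and,
      and_true, and_self, if_true, one_mul]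
    refine if_congr ?_ rfl rfl
    constructor
    · rintro ⟨ha, hb⟩
      exact (Prod.ext_iff.mpr ⟨by rw [hb, ha, hc0], ha⟩).symm
    · intro h; subst h; exact ⟨rfl, hc0.symm⟩
  · intro j _ hj
    simp only [transpose_apply, eFop]
    by_cases h1 : (p.2 = j.2 ∧ p.1 = σ p.2 j.1)
    · exact absurd (show j = (c0, p.2) from Prod.ext_iff.mpr
        ⟨(hσ p.2).injective (h1.2.symm.trans hc0.symm), h1.1.symm⟩) hj
    · rw [if_neg h1, zero_mul]
  · simp

lemma mulC (hσ : ∀ x, Function.Bijective (σ x))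
    (hinv : ∀ x y : X, σ (σ x y) (τ y x) = x ∧ τ (τ y x) (σ x y) = y) :
    (∑ x : X, ∑ y : X, kron2 (eM (σ x y) y) (eM x x))ᵀ
      * (∑ x : X, ∑ y : X, kron2 (eM x x) (eM (σ x y) y))
      = ∑ x : X, ∑ y : X, kron2 (eM y (σ x y)) (eM x (τ y x)) := by
  ext p q
  rw [Matrix.mul_apply, Finset.sum_eq_single ((σ p.2 p.1, p.2) : X × X)]
  · simp only [transpose_apply, eFop, eF, eRHS, eq_self_iff_true, true_and, and_true,
      and_self, if_true, one_mul]
    refine if_congr ?_ rfl rfl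
    constructor
    · rintro ⟨ha, hb⟩
      exact ⟨ha.symm, (hσ (σ p.2 p.1)).injective (by rw [← hb, (hinv p.2 p.1).1])⟩
    · rintro ⟨ha, hb⟩
      exact ⟨ha.symm, by rw [hb, (hinv p.2 p.1).1]⟩
  · intro j _ hj
    simp only [transpose_apply, eFop]
    by_cases h1 : (j.2 = p.2 ∧ j.1 = σ j.2 p.1)
    · exact absurd (show j = (σ p.2 p.1, p.2) from
        Prod.ext_iff.mpr ⟨h1.2.trans (by rw [h1.1]), h1.1⟩) hj
    · rw [if_neg h1, zero_mul]
  · simp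


lemma mulD : Pmat X * rcheckMat σ τ
    = ∑ x : X, ∑ y : X, kron2 (eM y (σ x y)) (eM x (τ y x)) := by
  ext p q
  rw [Matrix.mul_apply, Finset.sum_eq_single ((p.2, p.1) : X × X)]
  · simp only [eP, ercheck, eRHS, eq_self_iff_true, and_self, if_true, one_mul]
  · intro j _ hj
    simp only [eP]
    by_cases h1 : (p.1 = j.2 ∧ p.2 = j.1)
    · exact absurd (show j = (p.2, p.1) from Prod.ext_iff.mpr ⟨h1.2.symm, h1.1.symm⟩) hj
    · rw [if_neg h1, zero_mul]
  · simp

end lemmas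

/-- The twist factorizes `r = P ř`:
`(F^op)⁻¹ F = Σ_{x,y} e_{y,σ_x(y)} ⊗ e_{x,τ_y(x)} = P ř`, where
`F = Σ_{x,y} e_{x,x} ⊗ e_{σ_x(y),y}` and `F^op` is its flip. -/
theorem twist_factorization {X : Type*} [DecidableEq X] [Fintype X] (σ τ : X → X → X)
    (hσ : ∀ x, Function.Bijective (σ x))
    (hτ : ∀ y, Function.Bijective (τ y))
    (hinv : ∀ x y : X, σ (σ x y) (τ y x) = x ∧ τ (τ y x) (σ x y) = y) :
    (∑ x : X, ∑ y : X, kron2 (eM (σ x y) y) (eM x x))⁻¹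
        * (∑ x : X, ∑ y : X, kron2 (eM x x) (eM (σ x y) y))
      = ∑ x : X, ∑ y : X, kron2 (eM y (σ x y)) (eM x (τ y x))
    ∧ Pmat X * rcheckMat σ τ
      = ∑ x : X, ∑ y : X, kron2 (eM y (σ x y)) (eM x (τ y x)) := by
  constructor
  · rw [Matrix.inv_eq_right_inv (mulA σ hσ)]
    exact mulC σ τ hσ hinv
  · exact mulD σ τ
end

section
/- Let (X, ř) be a finite involutive non-degenerate set-theoretic solution and G = Σ_{x,y∈X} e_{τ_y(x),x} ⊗ e_{y,y}. Then G is invertible and G₂₁⁻¹ G₁₂ = Σ_{x,y∈X} e_{y,σ_x(y)} ⊗ e_{x,τ_y(x)} = r, where G₂₁ = P G₁₂ P. -/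
open Matrix

section Helpers

variable {X : Type*} [DecidableEq X] [Fintype X]

/-- Row-permutation matrix: entry `(p,q)` is `[p = f q]`. -/
def permM (f : X × X → X × X) : Matrix (X × X) (X × X) ℂ :=
  Matrix.of fun p q => if p = f q then 1 else 0

/-- Column version: entry `(p,q)` is `[q = f p]`. -/
def colM (f : X × X → X × X) : Matrix (X × X) (X × X) ℂ :=
  Matrix.of fun p q => if q = f p then 1 else 0

lemma permM_mul_permM (f g : X × X → X × X) : permM f * permM g = permM (f ∘ g) := by
  ext p q
  simp [permM, Matrix.mul_apply]

lemma colM_mul_permM (f g : X × X → X × X) (p q : X × X) :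
    (colM f * permM g) p q = if f p = g q then 1 else 0 := by
  simp [permM, colM, Matrix.mul_apply, eq_comm]

lemma permM_mul_colM_self (f : X × X → X × X) (hf : Function.Bijective f) :
    permM f * colM f = 1 := by
  ext p q
  obtain ⟨r0, hr0⟩ := hf.surjective p
  rw [Matrix.mul_apply, Finset.sum_eq_single r0 (fun x _ hx => ?_) (by simp)]
  · simp [permM, colM, hr0, Matrix.one_apply, eq_comm]
  · have : p ≠ f x := by rw [← hr0]; exact fun h => hx (hf.injective h.symm)
    simp [permM, this]

lemma colM_mul_permM_self (f : X × X → X × X) (hf : Function.Bijective f) :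
    colM f * permM f = 1 := by
  ext p q
  rw [colM_mul_permM]
  simp [Matrix.one_apply, hf.injective.eq_iff]

lemma G_eq (τ : X → X → X) :
    (∑ x : X, ∑ y : X, kron2 (eM (τ y x) x) (eM y y))
      = permM (fun q => (τ q.2 q.1, q.2)) := by
  ext ⟨a, b⟩ ⟨c, d⟩
  simp [kron2, eM, permM, Matrix.single, Finset.sum_ite_eq, ite_and,
    Prod.ext_iff, Matrix.sum_apply, and_comm, eq_comm]
  split_ifs <;> simp_all

lemma P_eq : Pmat X = permM (Prod.swap) := by
  ext ⟨a, b⟩ ⟨c, d⟩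
  simp [Pmat, kron2, eM, permM, Matrix.single, ite_and,
    Prod.ext_iff, Matrix.sum_apply, and_comm, eq_comm]

lemma RHS_eq (σ τ : X → X → X) :
    (∑ x : X, ∑ y : X, kron2 (eM y (σ x y)) (eM x (τ y x)))
      = colM (fun p => (σ p.2 p.1, τ p.1 p.2)) := by
  ext ⟨a, b⟩ ⟨c, d⟩
  simp [kron2, eM, colM, Matrix.single, ite_and,
    Prod.ext_iff, Matrix.sum_apply, and_comm, eq_comm]
  rw [Finset.sum_eq_single a (by intro x _ hx; simp [Ne.symm hx]) (by simp)]
  split_ifs <;> simp_all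

lemma rcheck_eq (σ τ : X → X → X) :
    rcheckMat σ τ = colM (rFun σ τ) := by
  ext ⟨a, b⟩ ⟨c, d⟩
  simp [rcheckMat, kron2, eM, colM, rFun, Matrix.single, ite_and,
    Prod.ext_iff, Matrix.sum_apply, and_comm, eq_comm]
  rw [Finset.sum_eq_single a (by intro x _ hx; simp [Ne.symm hx]) (by simp)]
  split_ifs <;> simp_all

lemma permM_swap_mul_colM (h : X × X → X × X) :
    permM Prod.swap * colM h = colM (h ∘ Prod.swap) := by
  ext p q
  rw [Matrix.mul_apply, Finset.sum_eq_single (Prod.swap p)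
    (by intro x _ hx
        have : p ≠ Prod.swap x := fun he => hx (by simp [he])
        simp [permM, this])
    (by simp)]
  simp [permM, colM]

end Helpers

/-- The alternative twist `G = Σ_{x,y} e_{τ_y(x),x} ⊗ e_{y,y}` is invertible and
`G₂₁⁻¹ G₁₂ = Σ_{x,y} e_{y,σ_x(y)} ⊗ e_{x,τ_y(x)} = r = P ř`, with `G₂₁ = P G₁₂ P`. -/
theorem alt_twist_factorization {X : Type*} [DecidableEq X] [Fintype X] (σ τ : X → X → X)
    (hσ : ∀ x, Function.Bijective (σ x))
    (hτ : ∀ y, Function.Bijective (τ y))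
    (hinv : ∀ x y : X, σ (σ x y) (τ y x) = x ∧ τ (τ y x) (σ x y) = y) :
    IsUnit (∑ x : X, ∑ y : X, kron2 (eM (τ y x) x) (eM y y))
    ∧ (Pmat X * (∑ x : X, ∑ y : X, kron2 (eM (τ y x) x) (eM y y)) * Pmat X)⁻¹
        * (∑ x : X, ∑ y : X, kron2 (eM (τ y x) x) (eM y y))
      = ∑ x : X, ∑ y : X, kron2 (eM y (σ x y)) (eM x (τ y x))
    ∧ Pmat X * rcheckMat σ τ
      = ∑ x : X, ∑ y : X, kron2 (eM y (σ x y)) (eM x (τ y x)) := by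
  set g : X × X → X × X := fun q => (τ q.2 q.1, q.2) with hg_def
  set g21 : X × X → X × X := fun q => (q.1, τ q.1 q.2) with hg21_def
  have hg : Function.Bijective g := by
    constructor
    · rintro ⟨a, b⟩ ⟨c, d⟩ h
      simp only [hg_def, Prod.mk.injEq] at h
      obtain ⟨h1, h2⟩ := h
      subst h2
      exact Prod.ext ((hτ b).injective h1) rfl
    · rintro ⟨a, b⟩
      obtain ⟨x, hx⟩ := (hτ b).surjective a
      exact ⟨(x, b), by simp [hg_def, hx]⟩
  have hg21 : Function.Bijective g21 := by
    constructor
    · rintro ⟨a, b⟩ ⟨c, d⟩ h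
      simp only [hg21_def, Prod.mk.injEq] at h
      obtain ⟨h1, h2⟩ := h
      subst h1
      exact Prod.ext rfl ((hτ a).injective h2)
    · rintro ⟨a, b⟩
      obtain ⟨x, hx⟩ := (hτ a).surjective b
      exact ⟨(a, x), by simp [hg21_def, hx]⟩
  have hG : (∑ x : X, ∑ y : X, kron2 (eM (τ y x) x) (eM y y)) = permM g := G_eq τ
  have hG21 : Pmat X * (∑ x : X, ∑ y : X, kron2 (eM (τ y x) x) (eM y y)) * Pmat X
      = permM g21 := by
    rw [hG, P_eq, permM_mul_permM, permM_mul_permM]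
    rfl
  have hG21inv : (Pmat X * (∑ x : X, ∑ y : X, kron2 (eM (τ y x) x) (eM y y)) * Pmat X)⁻¹
      = colM g21 := by
    rw [hG21]
    exact Matrix.inv_eq_right_inv (permM_mul_colM_self g21 hg21)
  refine ⟨?_, ?_, ?_⟩
  · rw [hG]
    exact ⟨⟨permM g, colM g, permM_mul_colM_self g hg, colM_mul_permM_self g hg⟩, rfl⟩
  · rw [hG21inv, hG, RHS_eq]
    ext p q
    rw [colM_mul_permM]
    simp only [colM, Matrix.of_apply]
    congr 1
    simp only [hg_def, hg21_def, Prod.ext_iff, eq_iff_iff]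
    constructor
    · rintro ⟨h1, h2⟩
      have k2 := (hinv q.1 q.2).2
      rw [← h1] at k2
      have hp2 : σ q.1 q.2 = p.2 := (hτ p.1).injective (k2.trans h2.symm)
      have k1 := (hinv q.1 q.2).1
      rw [hp2, ← h1] at k1
      exact ⟨k1.symm, h2.symm⟩
    · rintro ⟨h1, h2⟩
      rw [h1, h2]
      exact ⟨((hinv p.2 p.1).2).symm, rfl⟩
  · rw [rcheck_eq, P_eq, permM_swap_mul_colM, RHS_eq]
    rfl
end

section
/- Let (X, ř) be a finite involutive non-degenerate set-theoretic solution of the braid equation. Define F = Σ_{η,x} e_{η,η} ⊗ e_{σ_η(x),x}, F₀₁,₂ = Σ_{η,x,y} e_{σ_η(x),σ_η(x)} ⊗ e_{τ_x(η),τ_x(η)} ⊗ e_{σ_η(σ_x(y)),y}, and F₀,₁₂ = Σ_{η,x,y} e_{σ_η(x),σ_η(x)} ⊗ e_{η,τ_x(η)} ⊗ e_{σ_x(y),y}. Then the cocycle condition holds: (F ⊗ I) F₀₁,₂ = (I ⊗ F) F₀,₁₂. -/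
open Matrix

lemma leg01_kron3 {X : Type*} [DecidableEq X] [Fintype X]
    (M : Matrix (X × X) (X × X) ℂ) (A B C : Matrix X X ℂ) :
    leg01 M * kron3 A B C
      = Matrix.of fun p q => (M * kron2 A B) (p.1, p.2.1) (q.1, q.2.1) * C p.2.2 q.2.2 := by
  ext ⟨p1, p2, p3⟩ ⟨q1, q2, q3⟩
  simp only [Matrix.mul_apply, leg01, kron3, kron2, Matrix.of_apply,
    Fintype.sum_prod_type, ite_mul, mul_ite, mul_one, mul_zero, zero_mul, one_mul,
    Finset.sum_ite_eq, Finset.sum_ite_eq', Finset.mem_univ, if_true,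
    Finset.sum_ite_irrel, Finset.sum_const_zero, Finset.sum_mul]
  exact Finset.sum_congr rfl fun _ _ => Finset.sum_congr rfl fun _ _ => by ring

lemma leg12_kron3 {X : Type*} [DecidableEq X] [Fintype X]
    (M : Matrix (X × X) (X × X) ℂ) (A B C : Matrix X X ℂ) :
    leg12 M * kron3 A B C
      = Matrix.of fun p q => A p.1 q.1 * (M * kron2 B C) p.2 q.2 := by
  ext ⟨p1, p2, p3⟩ ⟨q1, q2, q3⟩
  simp only [Matrix.mul_apply, leg12, kron3, kron2, Matrix.of_apply,
    Fintype.sum_prod_type, ite_mul, mul_ite, mul_one, mul_zero, zero_mul, one_mul,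
    Finset.sum_ite_eq, Finset.sum_ite_eq', Finset.mem_univ, if_true,
    Finset.sum_ite_irrel, Finset.sum_const_zero, Finset.sum_mul]
  simp only [Finset.mul_sum]
  exact Finset.sum_congr rfl fun _ _ => Finset.sum_congr rfl fun _ _ => by ring

lemma Fmul {X : Type*} [DecidableEq X] [Fintype X] (σ : X → X → X) (a b c d : X) :
    (∑ η : X, ∑ x : X, kron2 (eM η η) (eM (σ η x) x)) * kron2 (eM a b) (eM c d)
      = kron2 (eM a b) (eM (σ a c) d) := by
  ext ⟨p1, p2⟩ ⟨q1, q2⟩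
  simp only [Matrix.mul_apply, kron2, eM, Matrix.single, Matrix.of_apply,
    Matrix.sum_apply, Finset.sum_apply, Fintype.sum_prod_type, ite_mul, mul_ite,
    mul_one, mul_zero, zero_mul, one_mul, Finset.sum_ite_eq, Finset.sum_ite_eq',
    Finset.mem_univ, if_true, Finset.sum_ite_irrel, Finset.sum_const_zero, ite_and,
    Finset.mul_sum, Finset.sum_mul]
  have h : ∀ x x_1 : X, (if σ x x_1 = p2 then if x_1 = c then if x = p1 then
      if x = a then (1:ℂ) else 0 else 0 else 0 else 0)
      = if x = a then (if x_1 = c then (if σ a c = p2 then if a = p1 then 1 else 0 else 0) else 0)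
        else 0 := by
    intro x x_1
    split_ifs <;> simp_all
  simp only [h, Finset.sum_ite_eq', Finset.mem_univ, if_true]
  split_ifs <;> simp_all

lemma kron3_eq_left {X : Type*} (A B C : Matrix X X ℂ) :
    (Matrix.of fun p q : X × X × X => kron2 A B (p.1, p.2.1) (q.1, q.2.1) * C p.2.2 q.2.2)
      = kron3 A B C := rfl

lemma kron3_eq_right {X : Type*} (A B C : Matrix X X ℂ) :
    (Matrix.of fun p q : X × X × X => A p.1 q.1 * kron2 B C p.2 q.2)
      = kron3 A B C := by
  ext p q; simp [kron2, kron3, mul_assoc]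

/-- The co-cycle condition `(F ⊗ I) F₀₁,₂ = (I ⊗ F) F₀,₁₂` for the set-theoretic twist
`F = Σ_{η,x} e_{η,η} ⊗ e_{σ_η(x),x}`. -/
theorem cocycle_condition {X : Type*} [DecidableEq X] [Fintype X] (σ τ : X → X → X)
    (hσ : ∀ x, Function.Bijective (σ x))
    (hτ : ∀ y, Function.Bijective (τ y))
    (hinv : Function.Involutive (rFun σ τ))
    (hbraid : rFun12 σ τ ∘ rFun23 σ τ ∘ rFun12 σ τ
            = rFun23 σ τ ∘ rFun12 σ τ ∘ rFun23 σ τ)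
    (hC1 : ∀ η x y : X, σ (σ η x) (σ (τ x η) y) = σ η (σ x y)) :
    leg01 (∑ η : X, ∑ x : X, kron2 (eM η η) (eM (σ η x) x))
        * (∑ η : X, ∑ x : X, ∑ y : X,
            kron3 (eM (σ η x) (σ η x)) (eM (τ x η) (τ x η)) (eM (σ η (σ x y)) y))
      = leg12 (∑ η : X, ∑ x : X, kron2 (eM η η) (eM (σ η x) x))
        * (∑ η : X, ∑ x : X, ∑ y : X,
            kron3 (eM (σ η x) (σ η x)) (eM η (τ x η)) (eM (σ x y) y)) := by
  have h1 : ∀ η x, σ (σ η x) (τ x η) = η := fun η x =>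
    congrArg Prod.fst (hinv (η, x))
  simp only [Finset.mul_sum]
  refine Finset.sum_congr rfl fun η _ => Finset.sum_congr rfl fun x _ =>
    Finset.sum_congr rfl fun y _ => ?_
  simp only [leg01_kron3, leg12_kron3, Fmul, kron3_eq_left, kron3_eq_right, h1]
end

section
/- Let (X, ř) be a finite involutive non-degenerate set-theoretic solution, r = Př, F₀₁₂ = Σ_{η,x,y} e_{η,η} ⊗ e_{σ_η(x),x} ⊗ e_{σ_η(σ_x(y)),y}, and F₁₂₀ obtained from F₀₁₂ by cyclically permuting tensor legs (0,1,2) → (1,2,0). Then the monodromy factorizes: r₀₂ r₀₁ = F₁₂₀⁻¹ F₀₁₂. -/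
open Matrix

/-! ### Auxiliary machinery: permutation-style matrices -/

/-- Permutation-style matrix in "row" convention: entry `(p,q)` is `[q = f p]`. -/
noncomputable def pmAux {α : Type*} [DecidableEq α] (f : α → α) : Matrix α α ℂ :=
  Matrix.of fun p q => if q = f p then 1 else 0

lemma pmAux_mul {α : Type*} [DecidableEq α] [Fintype α] (f g : α → α) :
    pmAux f * pmAux g = pmAux (g ∘ f) := by
  ext p q
  rw [Matrix.mul_apply, Finset.sum_eq_single (f p)]
  · simp [pmAux]
  · intro b _ hb
    simp [pmAux, hb]
  · simp

lemma pmAux_id {α : Type*} [DecidableEq α] : pmAux (id : α → α) = 1 := by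
  ext p q
  simp [pmAux, Matrix.one_apply, eq_comm]

/-- Column-convention permutation matrix equals the row-convention one of the inverse. -/
lemma qm_eq_pmAux {α : Type*} [DecidableEq α] (f f' : α → α)
    (h1 : ∀ x, f (f' x) = x) (h2 : ∀ x, f' (f x) = x) :
    (Matrix.of fun p q => if p = f q then (1:ℂ) else 0) = pmAux f' := by
  ext p q
  simp only [pmAux, Matrix.of_apply]
  refine if_congr ⟨fun h => ?_, fun h => ?_⟩ rfl rfl
  · rw [h, h2]
  · rw [h, h1]

/-- The double sum `Σ_{x,y} e_{y,σ_x(y)} ⊗ e_{x,τ_y(x)}` as a permutation matrix. -/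
lemma sum2_eq_pmAux {X : Type*} [DecidableEq X] [Fintype X] (σ τ : X → X → X) :
    (∑ x : X, ∑ y : X, kron2 (eM y (σ x y)) (eM x (τ y x)))
      = pmAux (fun p : X × X => (σ p.2 p.1, τ p.1 p.2)) := by
  ext ⟨a,b⟩ ⟨u,v⟩
  simp only [Matrix.sum_apply]
  rw [Finset.sum_eq_single b]
  · rw [Finset.sum_eq_single a]
    · simp only [kron2, eM, Matrix.single, pmAux, Prod.ext_iff, ite_and, eq_comm,
        Matrix.of_apply]
      split_ifs <;> simp_all
    · intro y _ hy
      simp [kron2, eM, Matrix.single, hy]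
    · simp
  · intro x _ hx
    simp [kron2, eM, Matrix.single, hx, Ne.symm hx]
  · simp

lemma leg01_pmAux {X : Type*} [DecidableEq X] (m : X × X → X × X) :
    leg01 (pmAux m)
      = pmAux (fun p : X × X × X =>
          ((m (p.1, p.2.1)).1, (m (p.1, p.2.1)).2, p.2.2)) := by
  ext ⟨a,b,c⟩ ⟨u,v,w⟩
  simp only [leg01, pmAux, Matrix.of_apply, Prod.ext_iff, ite_and, ite_mul, one_mul, zero_mul]
  split_ifs <;> simp_all

lemma leg02_pmAux {X : Type*} [DecidableEq X] (m : X × X → X × X) :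
    leg02 (pmAux m)
      = pmAux (fun p : X × X × X =>
          ((m (p.1, p.2.2)).1, p.2.1, (m (p.1, p.2.2)).2)) := by
  ext ⟨a,b,c⟩ ⟨u,v,w⟩
  simp only [leg02, pmAux, Matrix.of_apply, Prod.ext_iff, ite_and, ite_mul, one_mul, zero_mul]
  split_ifs <;> simp_all

/-- The triple sum `F₀₁₂` as a column-convention permutation matrix. -/
lemma F012_eq {X : Type*} [DecidableEq X] [Fintype X] (σ : X → X → X) :
    (∑ η : X, ∑ x : X, ∑ y : X,
        kron3 (eM η η) (eM (σ η x) x) (eM (σ η (σ x y)) y))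
      = Matrix.of fun p q : X × X × X =>
          if p = (q.1, σ q.1 q.2.1, σ q.1 (σ q.2.1 q.2.2)) then (1:ℂ) else 0 := by
  ext ⟨a,b,c⟩ ⟨u,v,w⟩
  simp only [Matrix.sum_apply]
  rw [Finset.sum_eq_single u]
  · rw [Finset.sum_eq_single v]
    · rw [Finset.sum_eq_single w]
      · simp only [kron3, eM, Matrix.single, Matrix.of_apply, Prod.ext_iff,
          ite_and, eq_comm]
        split_ifs <;> simp_all
      · intro y _ hy
        simp [kron3, eM, Matrix.single, hy, Ne.symm hy]
      · simp
    · intro x _ hx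
      simp [kron3, eM, Matrix.single, hx, Ne.symm hx]
    · simp
  · intro e _ he
    simp [kron3, eM, Matrix.single, he, Ne.symm he]
  · simp

/-- The triple sum `F₁₂₀` as a column-convention permutation matrix. -/
lemma F120_eq {X : Type*} [DecidableEq X] [Fintype X] (σ : X → X → X) :
    (∑ η : X, ∑ x : X, ∑ y : X,
        kron3 (eM (σ η (σ x y)) y) (eM η η) (eM (σ η x) x))
      = Matrix.of fun p q : X × X × X =>
          if p = (σ q.2.1 (σ q.2.2 q.1), q.2.1, σ q.2.1 q.2.2) then (1:ℂ) else 0 := by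
  ext ⟨a,b,c⟩ ⟨u,v,w⟩
  simp only [Matrix.sum_apply]
  rw [Finset.sum_eq_single v]
  · rw [Finset.sum_eq_single w]
    · rw [Finset.sum_eq_single u]
      · simp only [kron3, eM, Matrix.single, Matrix.of_apply, Prod.ext_iff,
          ite_and, eq_comm]
        split_ifs <;> simp_all
      · intro y _ hy
        simp [kron3, eM, Matrix.single, hy, Ne.symm hy]
      · simp
    · intro x _ hx
      simp [kron3, eM, Matrix.single, hx, Ne.symm hx]
    · simp
  · intro e _ he
    simp [kron3, eM, Matrix.single, he, Ne.symm he]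
  · simp

/-- Factorization of the monodromy: `r₀₂ r₀₁ = F₁₂₀⁻¹ F₀₁₂`, where
`F₀₁₂ = Σ_{η,x,y} e_{η,η} ⊗ e_{σ_η(x),x} ⊗ e_{σ_η(σ_x(y)),y}` and `F₁₂₀` is its
cyclic relabeling of tensor legs `(0,1,2) → (1,2,0)`. -/
theorem monodromy_factorization {X : Type*} [DecidableEq X] [Fintype X] (σ τ : X → X → X)
    (hσ : ∀ x, Function.Bijective (σ x))
    (hτ : ∀ y, Function.Bijective (τ y))
    (hinv : Function.Involutive (rFun σ τ))
    (hbraid : rFun12 σ τ ∘ rFun23 σ τ ∘ rFun12 σ τ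
            = rFun23 σ τ ∘ rFun12 σ τ ∘ rFun23 σ τ)
    (hC1 : ∀ η x y : X, σ (σ η x) (σ (τ x η) y) = σ η (σ x y))
    (hC2 : ∀ η x y : X, τ (τ y x) (τ (σ x y) η) = τ y (τ x η)) :
    leg02 (∑ x : X, ∑ y : X, kron2 (eM y (σ x y)) (eM x (τ y x)))
        * leg01 (∑ x : X, ∑ y : X, kron2 (eM y (σ x y)) (eM x (τ y x)))
      = (∑ η : X, ∑ x : X, ∑ y : X,
            kron3 (eM (σ η (σ x y)) y) (eM η η) (eM (σ η x) x))⁻¹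
        * (∑ η : X, ∑ x : X, ∑ y : X,
            kron3 (eM η η) (eM (σ η x) x) (eM (σ η (σ x y)) y)) := by
  classical
  -- inverse of σ in the second argument
  set σ' : X → X → X := fun x => (Equiv.ofBijective (σ x) (hσ x)).symm with hσ'def
  have hσ'σ : ∀ x y, σ' x (σ x y) = y := fun x y =>
    (Equiv.ofBijective (σ x) (hσ x)).symm_apply_apply y
  have hσσ' : ∀ x y, σ x (σ' x y) = y := fun x y =>
    (Equiv.ofBijective (σ x) (hσ x)).apply_symm_apply y
  -- consequences of involutivity
  have hI1 : ∀ x y, σ (σ x y) (τ y x) = x := fun x y => congrArg Prod.fst (hinv (x, y))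
  -- the relevant maps on X × X × X
  set g01 : X × X × X → X × X × X := fun p => (σ p.2.1 p.1, τ p.1 p.2.1, p.2.2) with hg01
  set g02 : X × X × X → X × X × X := fun p => (σ p.2.2 p.1, p.2.1, τ p.1 p.2.2) with hg02
  set f : X × X × X → X × X × X :=
    fun p => (p.1, σ p.1 p.2.1, σ p.1 (σ p.2.1 p.2.2)) with hf
  set h : X × X × X → X × X × X :=
    fun p => (σ p.2.1 (σ p.2.2 p.1), p.2.1, σ p.2.1 p.2.2) with hh
  set f' : X × X × X → X × X × X :=
    fun p => (p.1, σ' p.1 p.2.1, σ' (σ' p.1 p.2.1) (σ' p.1 p.2.2)) with hf'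
  set h' : X × X × X → X × X × X :=
    fun p => (σ' (σ' p.2.1 p.2.2) (σ' p.2.1 p.1), p.2.1, σ' p.2.1 p.2.2) with hh'
  have hff' : ∀ p, f (f' p) = p := by
    rintro ⟨a, b, c⟩
    simp [hf, hf', hσσ']
  have hf'f : ∀ p, f' (f p) = p := by
    rintro ⟨a, b, c⟩
    simp [hf, hf', hσ'σ]
  have hhh' : ∀ p, h (h' p) = p := by
    rintro ⟨a, b, c⟩
    simp [hh, hh', hσσ']
  have hh'h : ∀ p, h' (h p) = p := by
    rintro ⟨a, b, c⟩
    simp [hh, hh', hσ'σ]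
  -- identify all matrices as permutation matrices
  have hL01 : leg01 (∑ x : X, ∑ y : X, kron2 (eM y (σ x y)) (eM x (τ y x))) = pmAux g01 := by
    rw [sum2_eq_pmAux, leg01_pmAux]
  have hL02 : leg02 (∑ x : X, ∑ y : X, kron2 (eM y (σ x y)) (eM x (τ y x))) = pmAux g02 := by
    rw [sum2_eq_pmAux, leg02_pmAux]
  have hF012 : (∑ η : X, ∑ x : X, ∑ y : X,
      kron3 (eM η η) (eM (σ η x) x) (eM (σ η (σ x y)) y)) = pmAux f' := by
    rw [F012_eq]
    exact qm_eq_pmAux f f' hff' hf'f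
  have hF120 : (∑ η : X, ∑ x : X, ∑ y : X,
      kron3 (eM (σ η (σ x y)) y) (eM η η) (eM (σ η x) x)) = pmAux h' := by
    rw [F120_eq]
    exact qm_eq_pmAux h h' hhh' hh'h
  -- the inverse of F₁₂₀
  have hinv120 : (pmAux h')⁻¹ = pmAux h := by
    apply Matrix.inv_eq_right_inv
    rw [pmAux_mul]
    have : h ∘ h' = id := funext hhh'
    rw [this, pmAux_id]
  -- the key pointwise identity
  have key : ∀ p, f (g01 (g02 p)) = h p := by
    rintro ⟨a, b, c⟩
    simp only [hg01, hg02, hf, hh, Prod.mk.injEq]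
    refine ⟨by trivial, hI1 _ _, ?_⟩
    rw [hC1, hI1]
  have hcomp : f' ∘ h = g01 ∘ g02 := by
    funext p
    simp only [Function.comp_apply, ← key p, hf'f]
  rw [hL01, hL02, hF012, hF120, hinv120, pmAux_mul, pmAux_mul, hcomp]
end
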